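/- (Lemma 4.3 of the paper) Let 𝑴 be a real symmetric positive definite M×M matrix with unique symmetric positive definite square root 𝑴^{1/2} and 𝑴^{−1/2} = (𝑴^{1/2})^{−1}, let 𝒜 be a real symmetric positive definite M×M matrix, and let U₀, F ∈ ℝ^M. Then there exists a constant C > 0, depending only on 𝑴, 𝒜, U₀ and F (in particular independent of n and τ), such that the following holds: for every integer n ≥ 1 and every τ ∈ (0,1) with max{τ‖𝒜‖₂, ‖I − τ𝒜‖₂} < 1 and nτ ≤ 1, if (U_k) is defined by U_0 = U₀ and U_k = 𝑴^{−1/2}(I + τ𝒜)^{−1}𝑴^{1/2}U_{k−1} + τ𝑴^{−1/2}(I + τ𝒜)^{−1}𝑴^{−1/2}F for k ≥ 1, U is the M×(n+1) matrix with columns U_0, …, U_n, X = UᵀU, and X̄* = Ū*ᵀŪ* where Ū* is the M×(n+1) matrix with columns Ū*_k = (1 − τ‖𝒜‖₂)^k U₀, then ‖X − X̄*‖_F² ≤ C n⁴ τ². -/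

import Mathlib

open Matrix Finset

/-- The spectral norm (operator 2-norm) of a real square matrix. -/
noncomputable def spec {M : ℕ} (A : Matrix (Fin M) (Fin M) ℝ) : ℝ :=
  ‖LinearMap.toContinuousLinearMap (Matrix.toEuclideanLin A)‖

/-- The squared Frobenius norm of a real matrix. -/
noncomputable def frobSq {m l : ℕ} (A : Matrix (Fin m) (Fin l) ℝ) : ℝ :=
  ∑ i, ∑ j, (A i j) ^ 2

/-- The squared Euclidean norm of a real vector. -/
noncomputable def vecNormSq {M : ℕ} (x : Fin M → ℝ) : ℝ := ∑ i, (x i) ^ 2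

/-- The Euclidean norm of a real vector. -/
noncomputable def vecNorm {M : ℕ} (x : Fin M → ℝ) : ℝ := Real.sqrt (∑ i, (x i) ^ 2)

/-- The M×(n+1) matrix whose columns are the vectors `v 0, …, v n`. -/
noncomputable def colMat {M n : ℕ} (v : Fin (n + 1) → Fin M → ℝ) :
    Matrix (Fin M) (Fin (n + 1)) ℝ :=
  Matrix.of fun i k => v k i

open scoped Matrix.Norms.L2Operator

namespace Lem43

variable {M : ℕ}

lemma spec_eq (A : Matrix (Fin M) (Fin M) ℝ) : spec A = ‖A‖ := rfl

noncomputable def ev (x : Fin M → ℝ) : EuclideanSpace ℝ (Fin M) := (WithLp.equiv 2 _).symm x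

lemma vecNorm_eq (x : Fin M → ℝ) : vecNorm x = ‖ev x‖ := by
  simp [vecNorm, ev, EuclideanSpace.norm_eq, Real.norm_eq_abs, sq_abs]

lemma vecNorm_nonneg (x : Fin M → ℝ) : 0 ≤ vecNorm x := Real.sqrt_nonneg _

lemma spec_nonneg (A : Matrix (Fin M) (Fin M) ℝ) : 0 ≤ spec A := by
  rw [spec_eq]; exact norm_nonneg _

lemma vecNorm_add_le (x y : Fin M → ℝ) : vecNorm (x + y) ≤ vecNorm x + vecNorm y := by
  rw [vecNorm_eq, vecNorm_eq, vecNorm_eq, show ev (x + y) = ev x + ev y from rfl]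
  exact norm_add_le _ _

lemma vecNorm_smul (c : ℝ) (x : Fin M → ℝ) : vecNorm (c • x) = |c| * vecNorm x := by
  rw [vecNorm_eq, vecNorm_eq, show ev (c • x) = c • ev x from rfl, norm_smul, Real.norm_eq_abs]

lemma vecNorm_mulVec_le (A : Matrix (Fin M) (Fin M) ℝ) (x : Fin M → ℝ) :
    vecNorm (A *ᵥ x) ≤ spec A * vecNorm x := by
  rw [spec_eq, vecNorm_eq, vecNorm_eq]
  exact A.l2_opNorm_mulVec (ev x)

lemma spec_le_bound (A : Matrix (Fin M) (Fin M) ℝ) {c : ℝ} (hc : 0 ≤ c)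
    (h : ∀ x, vecNorm (A *ᵥ x) ≤ c * vecNorm x) : spec A ≤ c := by
  refine ContinuousLinearMap.opNorm_le_bound _ hc fun x => ?_
  have := h x
  rw [vecNorm_eq, vecNorm_eq] at this
  exact this

lemma spec_one_le : spec (1 : Matrix (Fin M) (Fin M) ℝ) ≤ 1 :=
  spec_le_bound _ zero_le_one fun x => by rw [one_mulVec, one_mul]

lemma spec_mul_le (A B : Matrix (Fin M) (Fin M) ℝ) : spec (A * B) ≤ spec A * spec B := by
  simp only [spec_eq]; exact Matrix.l2_opNorm_mul A B

lemma spec_smul (c : ℝ) (A : Matrix (Fin M) (Fin M) ℝ) : spec (c • A) = |c| * spec A := by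
  simp only [spec_eq]; rw [norm_smul, Real.norm_eq_abs]

lemma spec_sub_le (A B : Matrix (Fin M) (Fin M) ℝ) : spec (A - B) ≤ spec A + spec B := by
  simp only [spec_eq]; exact norm_sub_le _ _

lemma dot_le (x y : Fin M → ℝ) : x ⬝ᵥ y ≤ vecNorm x * vecNorm y := by
  rw [vecNorm_eq, vecNorm_eq]
  have h := real_inner_le_norm (ev x) (ev y)
  rwa [show inner ℝ (ev x) (ev y) = x ⬝ᵥ y by
    simp [dotProduct, PiLp.inner_apply, ev, mul_comm]] at h

lemma vecNorm_neg (x : Fin M → ℝ) : vecNorm (-x) = vecNorm x := by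
  simp [vecNorm, neg_sq]

lemma abs_dot_le (x y : Fin M → ℝ) : |x ⬝ᵥ y| ≤ vecNorm x * vecNorm y := by
  rw [abs_le]
  constructor
  · have := dot_le (-x) y
    rw [vecNorm_neg, neg_dotProduct] at this
    linarith
  · exact dot_le x y

lemma vecNorm_sq (x : Fin M → ℝ) : vecNorm x ^ 2 = x ⬝ᵥ x := by
  rw [vecNorm, Real.sq_sqrt (by positivity)]
  simp [dotProduct, sq]

lemma spec_inv_le {B : Matrix (Fin M) (Fin M) ℝ} (hB : IsUnit B.det)
    (hge : ∀ x, x ⬝ᵥ x ≤ x ⬝ᵥ (B *ᵥ x)) : spec B⁻¹ ≤ 1 := by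
  refine spec_le_bound _ zero_le_one fun y => ?_
  rw [one_mul]
  set x := B⁻¹ *ᵥ y with hx
  have hxy : B *ᵥ x = y := by rw [hx, mulVec_mulVec, Matrix.mul_nonsing_inv _ hB, one_mulVec]
  have h1 : x ⬝ᵥ x ≤ x ⬝ᵥ y := by rw [← hxy]; exact hge x
  have h2 : x ⬝ᵥ y ≤ vecNorm x * vecNorm y := dot_le x y
  have h3 := vecNorm_sq x
  nlinarith [vecNorm_nonneg x, vecNorm_nonneg y]

end Lem43

open Lem43

set_option maxHeartbeats 2000000 in
/-- **Lemma 4.3.** There is a constant `C > 0`, independent of `n` and `τ`, such that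
for all `n ≥ 1` and `τ ∈ (0,1)` with `max{τ‖𝒜‖₂, ‖I - τ𝒜‖₂} < 1` and `nτ ≤ 1`,
`‖X - X̄*‖_F² ≤ C n⁴ τ²`, where `X = UᵀU` for the backward Euler iterates `U_k`
with source term `F`, and `X̄* = Ū*ᵀŪ*` with `Ū*_k = (1 - τ‖𝒜‖₂)^k U₀`. -/
theorem lemma_4_3 {M : ℕ} (Mmat Msq A : Matrix (Fin M) (Fin M) ℝ)
    (hM : Mmat.PosDef) (hMsq : Msq.PosDef) (hsq : Msq * Msq = Mmat)
    (hA : A.PosDef) (U₀ F : Fin M → ℝ) :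
    ∃ C > 0, ∀ n : ℕ, 1 ≤ n → ∀ τ : ℝ, 0 < τ → τ < 1 →
      τ * spec A < 1 → spec (1 - τ • A) < 1 → (n : ℝ) * τ ≤ 1 →
      ∀ U : ℕ → Fin M → ℝ, U 0 = U₀ →
        (∀ k : ℕ, 1 ≤ k → U k = (Msq⁻¹ * (1 + τ • A)⁻¹ * Msq).mulVec (U (k - 1)) +
          τ • (Msq⁻¹ * (1 + τ • A)⁻¹ * Msq⁻¹).mulVec F) →
        frobSq ((colMat fun k : Fin (n + 1) => U (k : ℕ))ᵀ *
            (colMat fun k : Fin (n + 1) => U (k : ℕ)) -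
            (colMat fun k : Fin (n + 1) => (1 - τ * spec A) ^ (k : ℕ) • U₀)ᵀ *
            (colMat fun k : Fin (n + 1) => (1 - τ * spec A) ^ (k : ℕ) • U₀)) ≤
          C * (n : ℝ) ^ 4 * τ ^ 2 := by
  set s : ℝ := spec A with hs
  have hs0 : 0 ≤ s := spec_nonneg A
  set D₁ : ℝ := 2 * s * vecNorm (Msq *ᵥ U₀) + spec Msq⁻¹ * vecNorm F with hD₁
  have hD₁0 : 0 ≤ D₁ := by
    have := vecNorm_nonneg (Msq *ᵥ U₀); have := vecNorm_nonneg F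
    have := spec_nonneg Msq⁻¹; positivity
  set D : ℝ := spec Msq⁻¹ * D₁ with hD
  have hD0 : 0 ≤ D := mul_nonneg (spec_nonneg _) hD₁0
  set E : ℝ := D * (2 * vecNorm U₀ + D) with hE
  have hE0 : 0 ≤ E := by
    have := vecNorm_nonneg U₀; positivity
  refine ⟨4 * E ^ 2 + 1, by positivity, ?_⟩
  intro n hn τ hτ0 hτ1 hτs hIτ hnτ U hU0 hrec
  set β : ℝ := 1 - τ * s with hβ
  have hβ0 : 0 ≤ β := by rw [hβ]; linarith
  have hβ1 : β ≤ 1 := by rw [hβ]; nlinarith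
  have hβpow : ∀ j : ℕ, β ^ j ≤ 1 := fun j => pow_le_one₀ hβ0 hβ1
  have hβpow0 : ∀ j : ℕ, 0 ≤ β ^ j := fun j => pow_nonneg hβ0 j
  set J : Matrix (Fin M) (Fin M) ℝ := 1 + τ • A with hJ
  have hdotA : ∀ x : Fin M → ℝ, 0 ≤ x ⬝ᵥ (A *ᵥ x) := by
    intro x
    have := hA.posSemidef.dotProduct_mulVec_nonneg x
    rwa [star_trivial] at this
  have hdotself : ∀ x : Fin M → ℝ, 0 ≤ x ⬝ᵥ x := by
    intro x
    exact Finset.sum_nonneg fun i _ => mul_self_nonneg _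
  have hJdot : ∀ x : Fin M → ℝ, x ⬝ᵥ (J *ᵥ x) = x ⬝ᵥ x + τ * (x ⬝ᵥ (A *ᵥ x)) := by
    intro x
    rw [hJ, add_mulVec, one_mulVec, smul_mulVec, dotProduct_add, dotProduct_smul,
      smul_eq_mul]
  have hJpd : J.PosDef := by
    refine Matrix.PosDef.of_dotProduct_mulVec_pos ?_ ?_
    · rw [Matrix.IsHermitian, hJ, conjTranspose_add, conjTranspose_smul, conjTranspose_one,
        hA.1, star_trivial]
    · intro x hx
      have h1 := hA.dotProduct_mulVec_pos hx
      rw [star_trivial] at h1 ⊢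
      rw [hJdot x]
      have := hdotself x
      nlinarith
  have hJdet : IsUnit J.det := (Matrix.isUnit_iff_isUnit_det _).mp hJpd.isUnit
  have hMsqdet : IsUnit Msq.det := (Matrix.isUnit_iff_isUnit_det _).mp hMsq.isUnit
  have hJinv1 : spec J⁻¹ ≤ 1 := by
    refine spec_inv_le hJdet fun x => ?_
    rw [hJdot x]
    nlinarith [hdotA x]
  -- key bound 2
  have hkey2 : spec (J⁻¹ - β • 1) ≤ 2 * τ * s := by
    have h2 : (τ * s) • (1 : Matrix (Fin M) (Fin M) ℝ) - (β * τ) • A = 1 - β • J := by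
      rw [hβ, hJ]; module
    have factor : J⁻¹ - β • 1 = J⁻¹ * ((τ * s) • (1 : Matrix (Fin M) (Fin M) ℝ) - (β * τ) • A) := by
      rw [h2, mul_sub, mul_one, mul_smul_comm, Matrix.nonsing_inv_mul _ hJdet]
    rw [factor]
    calc spec (J⁻¹ * ((τ * s) • 1 - (β * τ) • A))
        ≤ spec J⁻¹ * spec ((τ * s) • (1 : Matrix (Fin M) (Fin M) ℝ) - (β * τ) • A) :=
          spec_mul_le _ _
      _ ≤ 1 * (spec ((τ * s) • (1 : Matrix (Fin M) (Fin M) ℝ)) + spec ((β * τ) • A)) := by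
          apply mul_le_mul hJinv1 (spec_sub_le _ _) (spec_nonneg _) zero_le_one
      _ ≤ 2 * τ * s := by
          rw [one_mul, spec_smul, spec_smul, abs_of_nonneg (by positivity : (0:ℝ) ≤ τ * s),
            abs_of_nonneg (by positivity : (0:ℝ) ≤ β * τ)]
          have h1 : τ * s * spec (1 : Matrix (Fin M) (Fin M) ℝ) ≤ τ * s * 1 := by
            apply mul_le_mul_of_nonneg_left spec_one_le (by positivity)
          have h3 : β * τ * spec A ≤ 1 * τ * s := by
            rw [← hs]
            apply mul_le_mul_of_nonneg_right _ hs0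
            apply mul_le_mul_of_nonneg_right hβ1 (le_of_lt hτ0)
          nlinarith
  -- the V recursion
  set V : ℕ → Fin M → ℝ := fun k => Msq *ᵥ U k with hV
  have hVrec : ∀ k : ℕ, 1 ≤ k → V k = J⁻¹ *ᵥ V (k - 1) + τ • (J⁻¹ * Msq⁻¹) *ᵥ F := by
    intro k hk
    show Msq *ᵥ U k = _
    rw [hrec k hk, mulVec_add, mulVec_smul, mulVec_mulVec, mulVec_mulVec,
      show Msq * (Msq⁻¹ * J⁻¹ * Msq) = J⁻¹ * Msq by
        rw [← Matrix.mul_assoc, ← Matrix.mul_assoc, Matrix.mul_nonsing_inv _ hMsqdet, one_mul],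
      show Msq * (Msq⁻¹ * J⁻¹ * Msq⁻¹) = J⁻¹ * Msq⁻¹ by
        rw [← Matrix.mul_assoc, ← Matrix.mul_assoc, Matrix.mul_nonsing_inv _ hMsqdet, one_mul],
      ← mulVec_mulVec]
  have hW : ∀ k : ℕ, vecNorm (V k - β ^ k • V 0) ≤ k * τ * D₁ := by
    intro k
    induction k with
    | zero => simp [vecNorm]
    | succ k ih =>
      have hrecV := hVrec (k + 1) (by omega)
      simp only [Nat.add_sub_cancel] at hrecV
      have key : V (k + 1) - β ^ (k + 1) • V 0 =
          (J⁻¹ *ᵥ (V k - β ^ k • V 0) + β ^ k • ((J⁻¹ - β • 1) *ᵥ V 0)) +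
            τ • (J⁻¹ * Msq⁻¹) *ᵥ F := by
        rw [hrecV]
        have e1 : J⁻¹ *ᵥ (V k - β ^ k • V 0) = J⁻¹ *ᵥ V k - β ^ k • (J⁻¹ *ᵥ V 0) := by
          rw [mulVec_sub, mulVec_smul]
        have e2 : (J⁻¹ - β • 1) *ᵥ V 0 = J⁻¹ *ᵥ V 0 - β • V 0 := by
          rw [sub_mulVec, smul_mulVec, one_mulVec]
        rw [e1, e2, smul_sub, smul_smul, ← pow_succ]
        abel
      rw [key]
      have t1 : vecNorm (J⁻¹ *ᵥ (V k - β ^ k • V 0)) ≤ k * τ * D₁ := by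
        calc vecNorm (J⁻¹ *ᵥ (V k - β ^ k • V 0))
            ≤ spec J⁻¹ * vecNorm (V k - β ^ k • V 0) := vecNorm_mulVec_le _ _
          _ ≤ 1 * (k * τ * D₁) := by
              apply mul_le_mul hJinv1 ih (vecNorm_nonneg _) zero_le_one
          _ = k * τ * D₁ := one_mul _
      have t2 : vecNorm (β ^ k • ((J⁻¹ - β • 1) *ᵥ V 0)) ≤ τ * (2 * s * vecNorm (V 0)) := by
        rw [vecNorm_smul, abs_of_nonneg (hβpow0 k)]
        calc β ^ k * vecNorm ((J⁻¹ - β • 1) *ᵥ V 0)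
            ≤ 1 * (spec (J⁻¹ - β • 1) * vecNorm (V 0)) := by
              apply mul_le_mul (hβpow k) (vecNorm_mulVec_le _ _) (vecNorm_nonneg _) zero_le_one
          _ ≤ 1 * (2 * τ * s * vecNorm (V 0)) := by
              apply mul_le_mul_of_nonneg_left _ zero_le_one
              exact mul_le_mul_of_nonneg_right hkey2 (vecNorm_nonneg _)
          _ = τ * (2 * s * vecNorm (V 0)) := by ring
      have t3 : vecNorm (τ • (J⁻¹ * Msq⁻¹) *ᵥ F) ≤ τ * (spec Msq⁻¹ * vecNorm F) := by
        rw [vecNorm_smul, abs_of_nonneg (le_of_lt hτ0)]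
        apply mul_le_mul_of_nonneg_left _ (le_of_lt hτ0)
        calc vecNorm ((J⁻¹ * Msq⁻¹) *ᵥ F) ≤ spec (J⁻¹ * Msq⁻¹) * vecNorm F :=
              vecNorm_mulVec_le _ _
          _ ≤ spec J⁻¹ * spec Msq⁻¹ * vecNorm F := by
              apply mul_le_mul_of_nonneg_right (spec_mul_le _ _) (vecNorm_nonneg _)
          _ ≤ 1 * spec Msq⁻¹ * vecNorm F := by
              apply mul_le_mul_of_nonneg_right _ (vecNorm_nonneg _)
              exact mul_le_mul_of_nonneg_right hJinv1 (spec_nonneg _)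
          _ = spec Msq⁻¹ * vecNorm F := by ring
      have tri : vecNorm ((J⁻¹ *ᵥ (V k - β ^ k • V 0) + β ^ k • ((J⁻¹ - β • 1) *ᵥ V 0)) +
            τ • (J⁻¹ * Msq⁻¹) *ᵥ F) ≤
          vecNorm (J⁻¹ *ᵥ (V k - β ^ k • V 0)) + vecNorm (β ^ k • ((J⁻¹ - β • 1) *ᵥ V 0)) +
            vecNorm (τ • (J⁻¹ * Msq⁻¹) *ᵥ F) := by
        calc _ ≤ vecNorm (J⁻¹ *ᵥ (V k - β ^ k • V 0) + β ^ k • ((J⁻¹ - β • 1) *ᵥ V 0)) +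
              vecNorm (τ • (J⁻¹ * Msq⁻¹) *ᵥ F) := vecNorm_add_le _ _
          _ ≤ _ := by
              have := vecNorm_add_le (J⁻¹ *ᵥ (V k - β ^ k • V 0))
                (β ^ k • ((J⁻¹ - β • 1) *ᵥ V 0))
              linarith
      have hV0 : V 0 = Msq *ᵥ U₀ := by rw [hV]; simp [hU0]
      have hsum : τ * (2 * s * vecNorm (V 0)) + τ * (spec Msq⁻¹ * vecNorm F) =
          τ * D₁ := by rw [hV0, hD₁]; ring
      have hstep : ((k : ℝ) + 1) * τ * D₁ = (k : ℝ) * τ * D₁ + τ * D₁ := by ring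
      push_cast
      rw [hstep]
      linarith
  -- bound on U k - β^k U₀
  have hUdiff : ∀ k : ℕ, vecNorm (U k - β ^ k • U₀) ≤ k * τ * D := by
    intro k
    have hid : U k - β ^ k • U₀ = Msq⁻¹ *ᵥ (V k - β ^ k • V 0) := by
      rw [mulVec_sub, mulVec_smul, hV]
      simp only [mulVec_mulVec, Matrix.nonsing_inv_mul _ hMsqdet, one_mulVec, hU0]
    rw [hid]
    calc vecNorm (Msq⁻¹ *ᵥ (V k - β ^ k • V 0))
        ≤ spec Msq⁻¹ * vecNorm (V k - β ^ k • V 0) := vecNorm_mulVec_le _ _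
      _ ≤ spec Msq⁻¹ * (k * τ * D₁) := by
          apply mul_le_mul_of_nonneg_left (hW k) (spec_nonneg _)
      _ = k * τ * D := by rw [hD]; ring
  -- bound on U k
  have hkτ : ∀ k : ℕ, k ≤ n → (k : ℝ) * τ ≤ 1 := by
    intro k hk
    calc (k : ℝ) * τ ≤ n * τ := by
          apply mul_le_mul_of_nonneg_right _ (le_of_lt hτ0)
          exact_mod_cast hk
      _ ≤ 1 := hnτ
  have hUk : ∀ k : ℕ, k ≤ n → vecNorm (U k) ≤ vecNorm U₀ + D := by
    intro k hk
    have h1 : U k = (U k - β ^ k • U₀) + β ^ k • U₀ := by abel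
    rw [h1]
    have h2 := vecNorm_add_le (U k - β ^ k • U₀) (β ^ k • U₀)
    have h3 : vecNorm (β ^ k • U₀) ≤ vecNorm U₀ := by
      rw [vecNorm_smul, abs_of_nonneg (hβpow0 k)]
      calc β ^ k * vecNorm U₀ ≤ 1 * vecNorm U₀ :=
            mul_le_mul_of_nonneg_right (hβpow k) (vecNorm_nonneg _)
        _ = vecNorm U₀ := one_mul _
    have h4 : vecNorm (U k - β ^ k • U₀) ≤ D := by
      calc vecNorm (U k - β ^ k • U₀) ≤ k * τ * D := hUdiff k
        _ ≤ 1 * D := mul_le_mul_of_nonneg_right (hkτ k hk) hD0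
        _ = D := one_mul _
    linarith
  -- entrywise bound
  have hentry : ∀ j k : ℕ, j ≤ n → k ≤ n →
      |U j ⬝ᵥ U k - (β ^ j • U₀) ⬝ᵥ (β ^ k • U₀)| ≤ n * τ * E := by
    intro j k hj hk
    have decomp : U j ⬝ᵥ U k - (β ^ j • U₀) ⬝ᵥ (β ^ k • U₀) =
        (U j - β ^ j • U₀) ⬝ᵥ U k + (β ^ j • U₀) ⬝ᵥ (U k - β ^ k • U₀) := by
      rw [sub_dotProduct, dotProduct_sub]; ring
    rw [decomp]
    have hjn : (j : ℝ) * τ * D ≤ n * τ * D := by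
      apply mul_le_mul_of_nonneg_right _ hD0
      apply mul_le_mul_of_nonneg_right _ (le_of_lt hτ0)
      exact_mod_cast hj
    have hkn : (k : ℝ) * τ * D ≤ n * τ * D := by
      apply mul_le_mul_of_nonneg_right _ hD0
      apply mul_le_mul_of_nonneg_right _ (le_of_lt hτ0)
      exact_mod_cast hk
    have b1 : |(U j - β ^ j • U₀) ⬝ᵥ U k| ≤ (n * τ * D) * (vecNorm U₀ + D) := by
      calc |(U j - β ^ j • U₀) ⬝ᵥ U k| ≤ vecNorm (U j - β ^ j • U₀) * vecNorm (U k) :=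
            abs_dot_le _ _
        _ ≤ (n * τ * D) * (vecNorm U₀ + D) := by
            apply mul_le_mul ((hUdiff j).trans hjn) (hUk k hk) (vecNorm_nonneg _)
            positivity
    have b2 : |(β ^ j • U₀) ⬝ᵥ (U k - β ^ k • U₀)| ≤ vecNorm U₀ * (n * τ * D) := by
      calc |(β ^ j • U₀) ⬝ᵥ (U k - β ^ k • U₀)| ≤
            vecNorm (β ^ j • U₀) * vecNorm (U k - β ^ k • U₀) := abs_dot_le _ _
        _ ≤ vecNorm U₀ * (n * τ * D) := by
            apply mul_le_mul _ ((hUdiff k).trans hkn) (vecNorm_nonneg _) (vecNorm_nonneg _)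
            rw [vecNorm_smul, abs_of_nonneg (hβpow0 j)]
            calc β ^ j * vecNorm U₀ ≤ 1 * vecNorm U₀ :=
                  mul_le_mul_of_nonneg_right (hβpow j) (vecNorm_nonneg _)
              _ = vecNorm U₀ := one_mul _
    calc |(U j - β ^ j • U₀) ⬝ᵥ U k + (β ^ j • U₀) ⬝ᵥ (U k - β ^ k • U₀)| ≤
          |(U j - β ^ j • U₀) ⬝ᵥ U k| + |(β ^ j • U₀) ⬝ᵥ (U k - β ^ k • U₀)| := abs_add_le _ _
      _ ≤ (n * τ * D) * (vecNorm U₀ + D) + vecNorm U₀ * (n * τ * D) := by linarith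
      _ = n * τ * E := by rw [hE]; ring
  -- entry identification
  have entry_eq : ∀ j k : Fin (n + 1),
      ((colMat fun k : Fin (n + 1) => U (k : ℕ))ᵀ *
          (colMat fun k : Fin (n + 1) => U (k : ℕ)) -
          (colMat fun k : Fin (n + 1) => β ^ (k : ℕ) • U₀)ᵀ *
          (colMat fun k : Fin (n + 1) => β ^ (k : ℕ) • U₀)) j k =
        U (j : ℕ) ⬝ᵥ U (k : ℕ) - (β ^ (j : ℕ) • U₀) ⬝ᵥ (β ^ (k : ℕ) • U₀) := by
    intro j k
    simp [Matrix.sub_apply, Matrix.mul_apply, colMat, dotProduct]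
  -- final summation
  rw [frobSq]
  have hbound : ∀ j k : Fin (n + 1),
      ((colMat fun k : Fin (n + 1) => U (k : ℕ))ᵀ *
          (colMat fun k : Fin (n + 1) => U (k : ℕ)) -
          (colMat fun k : Fin (n + 1) => β ^ (k : ℕ) • U₀)ᵀ *
          (colMat fun k : Fin (n + 1) => β ^ (k : ℕ) • U₀)) j k ^ 2 ≤ (n * τ * E) ^ 2 := by
    intro j k
    rw [entry_eq j k, ← sq_abs]
    apply pow_le_pow_left₀ (abs_nonneg _)
    exact hentry (j : ℕ) (k : ℕ) (by omega) (by omega)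
  calc (∑ j : Fin (n + 1), ∑ k : Fin (n + 1),
        ((colMat fun k : Fin (n + 1) => U (k : ℕ))ᵀ *
          (colMat fun k : Fin (n + 1) => U (k : ℕ)) -
          (colMat fun k : Fin (n + 1) => β ^ (k : ℕ) • U₀)ᵀ *
          (colMat fun k : Fin (n + 1) => β ^ (k : ℕ) • U₀)) j k ^ 2)
      ≤ ∑ _j : Fin (n + 1), ∑ _k : Fin (n + 1), (n * τ * E) ^ 2 := by
        apply Finset.sum_le_sum
        intro j _
        apply Finset.sum_le_sum
        intro k _
        exact hbound j k
    _ = ((n : ℝ) + 1) ^ 2 * (n * τ * E) ^ 2 := by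
        simp [Finset.sum_const, Finset.card_univ]
        ring
    _ ≤ (4 * E ^ 2 + 1) * (n : ℝ) ^ 4 * τ ^ 2 := by
        have hn1 : (1 : ℝ) ≤ (n : ℝ) := by exact_mod_cast hn
        have h2n : ((n : ℝ) + 1) ≤ 2 * n := by linarith
        have hsq : ((n : ℝ) + 1) ^ 2 ≤ 4 * (n : ℝ) ^ 2 := by nlinarith
        have hrhs : ((n : ℝ) + 1) ^ 2 * (n * τ * E) ^ 2 ≤
            4 * (n : ℝ) ^ 2 * (n * τ * E) ^ 2 := by
          apply mul_le_mul_of_nonneg_right hsq (by positivity)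
        have heq : 4 * (n : ℝ) ^ 2 * (n * τ * E) ^ 2 = 4 * E ^ 2 * (n : ℝ) ^ 4 * τ ^ 2 := by
          ring
        have hfin : 4 * E ^ 2 * (n : ℝ) ^ 4 * τ ^ 2 ≤ (4 * E ^ 2 + 1) * (n : ℝ) ^ 4 * τ ^ 2 := by
          have : (0 : ℝ) ≤ (n : ℝ) ^ 4 * τ ^ 2 := by positivity
          nlinarith
        linarith
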